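/- Let m ≥ 1, let γ be a Schwartz function on ℝ^m × ℝ and σ a Schwartz function on ℝ. Then for every x ∈ ℝ^m, after the change of variables (a,ω) = (ξ/ω, ω), the integral representation S[γ](x) := ∫_{ℝ^m×ℝ} γ(a,b)·σ(a·x − b) da db equals (2π)^{−1} ∫_ℝ ( ∫_{ℝ^m} γ^♯(ξ/ω, ω)·e^{i ξ·x} dξ )·σ^♯(ω)·|ω|^{−m} dω, where the outer integrand is absolutely integrable over ω ∈ ℝ \ {0}. -/

import Mathlib

open MeasureTheory Complex
open scoped RealInnerProductSpace

/-- Fourier transform in the bias variable: `φ^♯(ω) = ∫ φ(b) e^{-iωb} db`. -/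
noncomputable def biasFourier (φ : ℝ → ℂ) (ω : ℝ) : ℂ :=
  ∫ b : ℝ, φ b * Complex.exp (-Complex.I * ω * b)

/-- Fourier transform of `γ(a,b)` in the bias variable `b`. -/
noncomputable def gammaSharp (m : ℕ) (γ : EuclideanSpace ℝ (Fin m) × ℝ → ℂ)
    (a : EuclideanSpace ℝ (Fin m)) (ω : ℝ) : ℂ :=
  ∫ b : ℝ, γ (a, b) * Complex.exp (-Complex.I * ω * b)

noncomputable section

open SchwartzMap FourierTransform Real

variable {m : ℕ}

lemma biasFourier_eq_fourier (φ : ℝ → ℂ) (ω : ℝ) :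
    biasFourier φ ω = 𝓕 φ (ω / (2 * π)) := by
  rw [Real.fourier_real_eq_integral_exp_smul, biasFourier]
  congr 1
  funext b
  rw [smul_eq_mul, mul_comm]
  congr 1
  have h : (-2 * π * b * (ω / (2 * π)) : ℝ) = -(ω * b) := by
    field_simp
  rw [h]
  push_cast
  ring

abbrev Em (m : ℕ) := EuclideanSpace ℝ (Fin m)

instance (m : ℕ) : MeasureTheory.Measure.IsAddHaarMeasure (volume : Measure (Em m × ℝ)) := by
  rw [MeasureTheory.Measure.volume_eq_prod]
  infer_instance

lemma pair_temperate (a : Em m) :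
    Function.HasTemperateGrowth (fun b : ℝ => ((a, b) : Em m × ℝ)) := by
  have hdf : ∀ b : ℝ, HasFDerivAt (fun b : ℝ => ((a, b) : Em m × ℝ))
      ((0 : ℝ →L[ℝ] Em m).prod (ContinuousLinearMap.id ℝ ℝ)) b :=
    fun b => (hasFDerivAt_const a b).prodMk (hasFDerivAt_id b)
  apply Function.HasTemperateGrowth.of_fderiv (k := 1) (C := ‖a‖ + 1)
  · have : (fderiv ℝ (fun b : ℝ => ((a, b) : Em m × ℝ)))
        = fun _ => (0 : ℝ →L[ℝ] Em m).prod (ContinuousLinearMap.id ℝ ℝ) := by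
      funext b; exact (hdf b).fderiv
    rw [this]
    exact Function.HasTemperateGrowth.const _
  · exact fun b => (hdf b).differentiableAt
  · intro b
    have h1 : ‖((a, b) : Em m × ℝ)‖ ≤ ‖a‖ + ‖b‖ := by
      simp [Prod.norm_def, max_le_iff, le_add_iff_nonneg_right, le_add_iff_nonneg_left,
        norm_nonneg]
    calc ‖((a, b) : Em m × ℝ)‖ ≤ ‖a‖ + ‖b‖ := h1
      _ ≤ (‖a‖ + 1) * (1 + ‖b‖) ^ 1 := by nlinarith [norm_nonneg a, norm_nonneg b]

def gSlice (γ : SchwartzMap (Em m × ℝ) ℂ) (a : Em m) : SchwartzMap ℝ ℂ :=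
  SchwartzMap.compCLM (𝕜 := ℝ) (pair_temperate a)
    ⟨1, 1, fun b => by
      have : ‖b‖ ≤ ‖((a, b) : Em m × ℝ)‖ := by
        simp [Prod.norm_def]
      calc ‖b‖ ≤ ‖((a, b) : Em m × ℝ)‖ := this
        _ ≤ 1 * (1 + ‖((a, b) : Em m × ℝ)‖) ^ 1 := by nlinarith [norm_nonneg ((a, b) : Em m × ℝ)]⟩ γ

@[simp] lemma gSlice_apply (γ : SchwartzMap (Em m × ℝ) ℂ) (a : Em m) (b : ℝ) :
    gSlice γ a b = γ (a, b) := rfl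

lemma gammaSharp_eq_fourier (γ : SchwartzMap (Em m × ℝ) ℂ) (a : Em m) (ω : ℝ) :
    gammaSharp m γ a ω = 𝓕 (gSlice γ a) (ω / (2 * π)) := by
  rw [SchwartzMap.fourier_coe, ← biasFourier_eq_fourier]
  rfl

lemma step_A (γ : SchwartzMap (Em m × ℝ) ℂ) (σ : SchwartzMap ℝ ℂ) (a : Em m) (t : ℝ) :
    ∫ b : ℝ, γ (a, b) * σ (t - b)
      = (2 * (π : ℂ))⁻¹ * ∫ ω : ℝ, gammaSharp m γ a ω * biasFourier σ ω
          * Complex.exp (Complex.I * ω * t) := by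
  set g : SchwartzMap ℝ ℂ := fourierTransformCLM ℂ σ with hg
  have hgdef : ∀ w, g w = 𝓕 σ w := fun w => by rw [hg, fourierTransformCLM_apply]
  -- inversion
  have hinv : ∀ s : ℝ, σ s = ∫ w : ℝ, Complex.exp (((2 * π * (w * s) : ℝ) : ℂ) * Complex.I) * g w := by
    intro s
    have h1 : 𝓕⁻ (𝓕 (σ : ℝ → ℂ)) = σ :=
      σ.continuous.fourierInv_fourier_eq σ.integrable (by rw [← SchwartzMap.fourier_coe, ← fourierTransformCLM_apply (𝕜 := ℂ)]; exact (fourierTransformCLM ℂ σ).integrable)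
    conv_lhs => rw [← h1]
    rw [Real.fourierInv_eq']
    congr 1
    funext w; rw [smul_eq_mul, hgdef, SchwartzMap.fourier_coe, RCLike.inner_apply', RCLike.conj_to_real]
  -- rewrite the left side as a double integral
  have step1 : ∫ b : ℝ, γ (a, b) * σ (t - b)
      = ∫ b : ℝ, ∫ w : ℝ, γ (a, b) * (Complex.exp (((2 * π * (w * (t - b)) : ℝ) : ℂ) * Complex.I) * g w) := by
    congr 1
    funext b
    rw [hinv (t - b), ← integral_const_mul]
  rw [step1]
  -- Fubini
  have hint : Integrable (Function.uncurry fun b w : ℝ =>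
      γ (a, b) * (Complex.exp (((2 * π * (w * (t - b)) : ℝ) : ℂ) * Complex.I) * g w))
      (volume.prod volume) := by
    apply Integrable.mono' (g := fun p : ℝ × ℝ => ‖γ (a, p.1)‖ * ‖g p.2‖)
    · exact ((gSlice γ a).integrable.norm).mul_prod (g.integrable.norm)
    · apply Continuous.aestronglyMeasurable
      apply Continuous.mul
      · exact ((gSlice γ a).continuous.comp continuous_fst)
      · apply Continuous.mul
        · apply Complex.continuous_exp.comp
          apply Continuous.mul _ continuous_const
          apply Complex.continuous_ofReal.comp
          fun_prop
        · exact g.continuous.comp continuous_snd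
    · filter_upwards with p
      simp only [Function.uncurry, norm_mul, Complex.norm_exp_ofReal_mul_I, one_mul]
      exact le_refl _
  rw [integral_integral_swap hint]
  -- compute the inner integral over b
  have step2 : ∀ w : ℝ, (∫ b : ℝ, γ (a, b) * (Complex.exp (((2 * π * (w * (t - b)) : ℝ) : ℂ) * Complex.I) * g w))
      = 𝓕 (gSlice γ a) w * g w * Complex.exp (((2 * π * (w * t) : ℝ) : ℂ) * Complex.I) := by
    intro w
    rw [SchwartzMap.fourier_coe, Real.fourier_real_eq_integral_exp_smul]
    rw [← integral_mul_const, ← integral_mul_const]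
    congr 1
    funext b
    rw [smul_eq_mul]
    have hsplit : Complex.exp (((2 * π * (w * (t - b)) : ℝ) : ℂ) * Complex.I)
        = Complex.exp (((-2 * π * b * w : ℝ) : ℂ) * Complex.I)
          * Complex.exp (((2 * π * (w * t) : ℝ) : ℂ) * Complex.I) := by
      rw [← Complex.exp_add]
      congr 1
      push_cast
      ring
    rw [hsplit]
    simp only [gSlice_apply]
    ring
  rw [MeasureTheory.integral_congr_ae (Filter.Eventually.of_forall step2)]
  have hdiv := MeasureTheory.Measure.integral_comp_div
      (fun w => 𝓕 (gSlice γ a) w * g w * Complex.exp (((2 * π * (w * t) : ℝ) : ℂ) * Complex.I))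
      (2 * π)
  rw [abs_of_pos (by positivity : (0:ℝ) < 2 * π)] at hdiv
  have key : ∀ ω : ℝ, 𝓕 (gSlice γ a) (ω / (2 * π)) * g (ω / (2 * π))
        * Complex.exp (((2 * π * ((ω / (2 * π)) * t) : ℝ) : ℂ) * Complex.I)
      = gammaSharp m γ a ω * biasFourier σ ω * Complex.exp (Complex.I * ω * t) := by
    intro ω
    rw [← gammaSharp_eq_fourier, hgdef, SchwartzMap.fourier_coe, ← biasFourier_eq_fourier]
    congr 1
    have h : (2 * π * (ω / (2 * π) * t) : ℝ) = ω * t := by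
      field_simp
    rw [h]
    congr 1
    push_cast
    ring
  have h3 : (∫ ω : ℝ, gammaSharp m γ a ω * biasFourier σ ω * Complex.exp (Complex.I * ω * t))
      = (2 * π : ℝ) • ∫ w : ℝ, 𝓕 (gSlice γ a) w * g w
          * Complex.exp (((2 * π * (w * t) : ℝ) : ℂ) * Complex.I) := by
    rw [← hdiv]
    exact MeasureTheory.integral_congr_ae (Filter.Eventually.of_forall fun ω => (key ω).symm)
  rw [h3, Complex.real_smul]
  push_cast
  rw [← mul_assoc, inv_mul_cancel₀ (by
    exact mul_ne_zero two_ne_zero (Complex.ofReal_ne_zero.2 Real.pi_ne_zero)), one_mul]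

lemma gammaSharp_norm_le (γ : SchwartzMap (Em m × ℝ) ℂ) (a : Em m) (ω : ℝ) :
    ‖gammaSharp m γ a ω‖ ≤ ∫ b : ℝ, ‖γ (a, b)‖ := by
  refine (norm_integral_le_integral_norm _).trans (le_of_eq ?_)
  congr 1
  funext b
  rw [norm_mul]
  have : (-Complex.I * ω * b) = ((-(ω * b) : ℝ) : ℂ) * Complex.I := by push_cast; ring
  rw [this, Complex.norm_exp_ofReal_mul_I, mul_one]

lemma gammaSharp_stronglyMeasurable (γ : SchwartzMap (Em m × ℝ) ℂ) :
    StronglyMeasurable (fun p : Em m × ℝ => gammaSharp m γ p.1 p.2) := by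
  apply StronglyMeasurable.integral_prod_right'
    (f := fun q : (Em m × ℝ) × ℝ => γ (q.1.1, q.2) * Complex.exp (-Complex.I * q.1.2 * q.2))
  apply Continuous.stronglyMeasurable
  apply Continuous.mul
  · exact γ.continuous.comp (by fun_prop)
  · exact Complex.continuous_exp.comp (by fun_prop)

lemma biasFourier_integrable (σ : SchwartzMap ℝ ℂ) : Integrable (biasFourier σ) := by
  have h : biasFourier (σ : ℝ → ℂ) = fun ω => (fourierTransformCLM ℂ σ) ((2 * π)⁻¹ • ω) := by
    funext ω
    rw [biasFourier_eq_fourier, fourierTransformCLM_apply]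
    congr 1
    rw [smul_eq_mul, div_eq_inv_mul, SchwartzMap.fourier_coe]
  rw [h]
  exact (integrable_comp_smul_iff volume (fourierTransformCLM ℂ σ : ℝ → ℂ)
    (by positivity : ((2:ℝ) * π)⁻¹ ≠ 0)).2 (fourierTransformCLM ℂ σ).integrable

lemma biasFourier_continuous (σ : SchwartzMap ℝ ℂ) : Continuous (biasFourier σ) := by
  have h : biasFourier (σ : ℝ → ℂ) = fun ω => (fourierTransformCLM ℂ σ) (ω / (2 * π)) := by
    funext ω; rw [biasFourier_eq_fourier, fourierTransformCLM_apply, SchwartzMap.fourier_coe]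
  rw [h]
  exact (fourierTransformCLM ℂ σ).continuous.comp (by fun_prop)

lemma G_integrable (γ : SchwartzMap (Em m × ℝ) ℂ) (σ : SchwartzMap ℝ ℂ) (x : Em m) :
    Integrable (Function.uncurry fun (a : Em m) (ω : ℝ) =>
      gammaSharp m γ a ω * biasFourier σ ω * Complex.exp (Complex.I * ω * ⟪a, x⟫))
      (volume.prod volume) := by
  have hγ : Integrable (fun p : Em m × ℝ => (γ p : ℂ)) (volume.prod volume) := by
    exact (Measure.volume_eq_prod (Em m) ℝ) ▸ γ.integrable
  apply Integrable.mono'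
      (g := fun p : Em m × ℝ => (∫ b : ℝ, ‖γ (p.1, b)‖) * ‖biasFourier σ p.2‖)
  · exact (hγ.integral_norm_prod_left).mul_prod (biasFourier_integrable σ).norm
  · apply AEStronglyMeasurable.mul
    · apply AEStronglyMeasurable.mul
      · exact ((gammaSharp_stronglyMeasurable γ).comp_measurable
          (measurable_fst.prodMk measurable_snd)).aestronglyMeasurable
      · exact ((biasFourier_continuous σ).comp continuous_snd).aestronglyMeasurable
    · apply Continuous.aestronglyMeasurable
      apply Complex.continuous_exp.comp
      have : Continuous fun p : Em m × ℝ => ⟪p.1, x⟫ := by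
        exact (continuous_id.inner continuous_const).comp continuous_fst
      fun_prop
  · filter_upwards with p
    simp only [Function.uncurry, norm_mul]
    have he : ‖Complex.exp (Complex.I * p.2 * ⟪p.1, x⟫)‖ = 1 := by
      have : (Complex.I * p.2 * ⟪p.1, x⟫) = ((p.2 * ⟪p.1, x⟫ : ℝ) : ℂ) * Complex.I := by
        push_cast; ring
      rw [this, Complex.norm_exp_ofReal_mul_I]
    rw [he, mul_one]
    exact mul_le_mul_of_nonneg_right (gammaSharp_norm_le γ p.1 p.2) (norm_nonneg _)

lemma step_D (γ : SchwartzMap (Em m × ℝ) ℂ) (σ : SchwartzMap ℝ ℂ) (x : Em m)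
    {ω : ℝ} (hω : ω ≠ 0) :
    (∫ ξ : Em m, gammaSharp m γ (ω⁻¹ • ξ) ω * Complex.exp (Complex.I * ⟪ξ, x⟫))
        * biasFourier σ ω * ((|ω| ^ (-(m : ℤ)) : ℝ) : ℂ)
      = ∫ a : Em m, gammaSharp m γ a ω * biasFourier σ ω
          * Complex.exp (Complex.I * ω * ⟪a, x⟫) := by
  set f : Em m → ℂ := fun ξ => gammaSharp m γ (ω⁻¹ • ξ) ω * Complex.exp (Complex.I * ⟪ξ, x⟫)
    with hf
  have hcomp : ∀ a : Em m, f (ω • a)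
      = gammaSharp m γ a ω * Complex.exp (Complex.I * ω * ⟪a, x⟫) := by
    intro a
    rw [hf]
    simp only
    rw [inv_smul_smul₀ hω, real_inner_smul_left]
    congr 1
    push_cast
    ring
  have h1 : (∫ a : Em m, gammaSharp m γ a ω * Complex.exp (Complex.I * ω * ⟪a, x⟫))
      = |((ω : ℝ) ^ m)⁻¹| • ∫ ξ : Em m, f ξ := by
    have hs := Measure.integral_comp_smul (μ := volume) f ω
    rw [finrank_euclideanSpace_fin] at hs
    rw [← hs]
    exact integral_congr_ae (Filter.Eventually.of_forall fun a => (hcomp a).symm)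
  have habs : |((ω : ℝ) ^ m)⁻¹| = (|ω| ^ (-(m : ℤ)) : ℝ) := by
    rw [abs_inv, _root_.abs_pow, zpow_neg, zpow_natCast]
  have h2 : (∫ a : Em m, gammaSharp m γ a ω * biasFourier σ ω
        * Complex.exp (Complex.I * ω * ⟪a, x⟫))
      = (∫ a : Em m, gammaSharp m γ a ω * Complex.exp (Complex.I * ω * ⟪a, x⟫))
          * biasFourier σ ω := by
    rw [← integral_mul_const]
    congr 1
    funext a
    ring
  rw [h2, h1, habs, Complex.real_smul]
  ring

end

theorem integral_representation_change_of_variables (m : ℕ) (hm : 1 ≤ m)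
    (γ : SchwartzMap (EuclideanSpace ℝ (Fin m) × ℝ) ℂ) (σ : SchwartzMap ℝ ℂ)
    (x : EuclideanSpace ℝ (Fin m)) :
    IntegrableOn (fun ω : ℝ =>
        (∫ ξ : EuclideanSpace ℝ (Fin m),
            gammaSharp m γ (ω⁻¹ • ξ) ω * Complex.exp (Complex.I * ⟪ξ, x⟫))
          * biasFourier σ ω * ((|ω| ^ (-(m : ℤ)) : ℝ) : ℂ)) {(0 : ℝ)}ᶜ ∧
    (∫ p : EuclideanSpace ℝ (Fin m) × ℝ, γ p * σ (⟪p.1, x⟫ - p.2))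
      = (2 * (Real.pi : ℂ))⁻¹
          * ∫ ω : ℝ,
              (∫ ξ : EuclideanSpace ℝ (Fin m),
                  gammaSharp m γ (ω⁻¹ • ξ) ω * Complex.exp (Complex.I * ⟪ξ, x⟫))
                * biasFourier σ ω * ((|ω| ^ (-(m : ℤ)) : ℝ) : ℂ) := by
  have hG := G_integrable γ σ x
  have hH : Integrable (fun ω : ℝ => ∫ a : Em m, gammaSharp m γ a ω * biasFourier σ ω
      * Complex.exp (Complex.I * ω * ⟪a, x⟫)) := by
    simpa [Function.uncurry] using hG.integral_prod_right
  have hEq : ∀ ω : ℝ, ω ≠ 0 →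
      (∫ ξ : Em m, gammaSharp m γ (ω⁻¹ • ξ) ω * Complex.exp (Complex.I * ⟪ξ, x⟫))
          * biasFourier σ ω * ((|ω| ^ (-(m : ℤ)) : ℝ) : ℂ)
        = ∫ a : Em m, gammaSharp m γ a ω * biasFourier σ ω
            * Complex.exp (Complex.I * ω * ⟪a, x⟫) := fun ω hω => step_D γ σ x hω
  have hae : ∀ᵐ ω : ℝ, ω ≠ 0 := by
    rw [MeasureTheory.ae_iff]
    simp only [not_not, Set.setOf_eq_eq_singleton]
    exact measure_singleton 0
  constructor
  · refine (hH.integrableOn).congr_fun (fun ω hω => (hEq ω hω).symm)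
      (measurableSet_singleton 0).compl
  · -- boundedness of σ
    obtain ⟨C, hC⟩ := σ.decay' 0 0
    have hCb : ∀ y : ℝ, ‖σ y‖ ≤ C := by
      intro y
      have := hC y
      simp [norm_iteratedFDeriv_zero] at this; exact this
    have hintP : Integrable (fun p : Em m × ℝ => (γ p : ℂ) * σ (⟪p.1, x⟫ - p.2)) := by
      apply Integrable.mono' ((γ.integrable (μ := volume)).norm.const_mul C)
      · apply Continuous.aestronglyMeasurable
        apply γ.continuous.mul
        apply σ.continuous.comp
        exact ((continuous_id.inner continuous_const).comp continuous_fst).sub continuous_snd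
      · filter_upwards with p
        rw [norm_mul]
        calc ‖γ p‖ * ‖σ (⟪p.1, x⟫ - p.2)‖ ≤ ‖γ p‖ * C :=
              mul_le_mul_of_nonneg_left (hCb _) (norm_nonneg _)
          _ = C * ‖γ p‖ := mul_comm _ _
    have h0 : (∫ p : EuclideanSpace ℝ (Fin m) × ℝ, γ p * σ (⟪p.1, x⟫ - p.2))
        = ∫ a : Em m, ∫ b : ℝ, γ (a, b) * σ (⟪a, x⟫ - b) := by
      rw [Measure.volume_eq_prod] at hintP ⊢
      exact MeasureTheory.integral_prod _ hintP
    rw [h0]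
    have h1 : ∀ a : Em m, (∫ b : ℝ, γ (a, b) * σ (⟪a, x⟫ - b))
        = (2 * (Real.pi : ℂ))⁻¹ * ∫ ω : ℝ, gammaSharp m γ a ω * biasFourier σ ω
            * Complex.exp (Complex.I * ω * ⟪a, x⟫) := fun a => step_A γ σ a ⟪a, x⟫
    rw [integral_congr_ae (Filter.Eventually.of_forall h1), integral_const_mul]
    congr 1
    rw [integral_integral_swap hG]
    refine integral_congr_ae ?_
    filter_upwards [hae] with ω hω
    exact (hEq ω hω).symm
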